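/- Let k ≥ 4 and let t₁,…,t_k ∈ {0,1}^n be such that the partial k-NU operation applies non-projectively with result t: there are k nonempty pairwise disjoint sets I₁,…,I_k ⊆ [n] such that t_i[j] ≠ t[j] iff j ∈ I_i. If S ⊆ [n] is chosen uniformly at random and y(u) = ⊕_{i∈S} u[i], then the probability that the column (y(t₁),…,y(t_k)) lies in the domain of the partial k-NU operation is exactly (2k+2)/2^k. -/

import Mathlib

/-- The parity bit `⊕_{i ∈ S} t i` of a Boolean tuple over an index set `S`. -/
def parityBit {n : ℕ} (S : Finset (Fin n)) (t : Fin n → Bool) : Bool :=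
  decide ((S.filter fun i => t i = true).card % 2 = 1)

open Finset

lemma two_zsmul' (c : ZMod 2) : c + c = 0 := by revert c; decide

lemma zmod2_cases (x : ZMod 2) : x = 0 ∨ x = 1 := by revert x; decide

lemma zmod2_ne {x y : ZMod 2} (h : x ≠ y) : x = y + 1 := by revert h; revert x y; decide

lemma zmod2_add_one_ne (x : ZMod 2) : x + 1 ≠ x := by revert x; decide

lemma zmod2_ne_add {x y : ZMod 2} (h : x ≠ y) : x + y = 1 := by revert h; revert x y; decide

lemma decide_zmod_helper (c v : ZMod 2) (x : Bool) :
    (decide (c + v = 1) = x) ↔ v = (if x then 1 + c else c) := by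
  revert c v x; decide

lemma zsum_symmDiff {α : Type*} [DecidableEq α] (A B : Finset α) (f : α → ZMod 2) :
    ∑ i ∈ symmDiff A B, f i = ∑ i ∈ A, f i + ∑ i ∈ B, f i := by
  rw [symmDiff_def, Finset.sup_eq_union, Finset.sum_union disjoint_sdiff_sdiff]
  have h1 : ∑ i ∈ A \ B, f i = ∑ i ∈ A, f i - ∑ i ∈ A ∩ B, f i := by
    rw [← Finset.sdiff_inter_self_left A B, Finset.sum_sdiff_eq_sub inter_subset_left]
  have h2 : ∑ i ∈ B \ A, f i = ∑ i ∈ B, f i - ∑ i ∈ A ∩ B, f i := by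
    rw [inter_comm, ← Finset.sdiff_inter_self_left B A,
      Finset.sum_sdiff_eq_sub inter_subset_left]
  rw [h1, h2]
  linear_combination (-1 : ZMod 2) * two_zsmul' (∑ i ∈ A ∩ B, f i)

lemma zcard_symmDiff {α : Type*} [DecidableEq α] (A B : Finset α) :
    (((symmDiff A B).card : ℕ) : ZMod 2) = (A.card : ZMod 2) + (B.card : ZMod 2) := by
  have := zsum_symmDiff A B (fun _ => (1 : ZMod 2))
  simpa using this

lemma natCast_zmod2_eq_one_iff (c : ℕ) : ((c : ℕ) : ZMod 2) = 1 ↔ c % 2 = 1 := by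
  have hmod : ((c % 2 : ℕ) : ZMod 2) = (c : ZMod 2) := ZMod.natCast_mod c 2
  constructor
  · intro h
    rcases Nat.mod_two_eq_zero_or_one c with h0 | h1
    · rw [h0] at hmod; simp at hmod; rw [← hmod] at h; exact absurd h (by decide)
    · exact h1
  · intro h; rw [h] at hmod; simpa using hmod.symm

lemma parityBit_eq_decide {n : ℕ} (S : Finset (Fin n)) (u : Fin n → Bool) :
    parityBit S u = decide ((∑ i ∈ S, (if u i = true then (1 : ZMod 2) else 0)) = 1) := by
  unfold parityBit
  have hsum : ∑ i ∈ S, (if u i = true then (1 : ZMod 2) else 0)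
      = ((S.filter fun i => u i = true).card : ZMod 2) := by
    rw [← Finset.sum_filter]
    simp
  rw [hsum]
  exact (decide_eq_decide).mpr (natCast_zmod2_eq_one_iff _).symm

lemma exists_third {k : ℕ} (hk : 4 ≤ k) (j j' : Fin k) :
    ∃ a : Fin k, a ≠ j ∧ a ≠ j' := by
  have hne : ({j, j'} : Finset (Fin k)) ≠ univ := by
    intro h
    have h2 : (univ : Finset (Fin k)).card ≤ 2 := by
      rw [← h]
      exact (Finset.card_insert_le _ _).trans (by simp)
    rw [Finset.card_univ, Fintype.card_fin] at h2
    omega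
  obtain ⟨a, -, ha⟩ := Finset.exists_of_ssubset (Finset.ssubset_univ_iff.mpr hne)
  simp only [Finset.mem_insert, Finset.mem_singleton, not_or] at ha
  exact ⟨a, ha.1, ha.2⟩

lemma card_nu_vectors (k : ℕ) (hk : 4 ≤ k) :
    ((Finset.univ : Finset (Fin k → ZMod 2)).filter
      fun v => ∃ (x : ZMod 2) (jj : Fin k), ∀ a, a ≠ jj → v a = x).card = 2 * k + 2 := by
  have hk0 : 0 < k := by omega
  set F : ZMod 2 × Fin k → (Fin k → ZMod 2) :=
    fun p => Function.update (fun _ => p.1) p.2 (p.1 + 1) with hF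
  have hFinj : Function.Injective F := by
    rintro ⟨x, j⟩ ⟨x', j'⟩ h
    obtain ⟨a, ha1, ha2⟩ := exists_third hk j j'
    have hx : x = x' := by
      have := congrFun h a
      simpa [hF, Function.update_of_ne ha1, Function.update_of_ne ha2] using this
    subst hx
    have hj : j = j' := by
      by_contra hjj
      have := congrFun h j
      rw [hF] at this
      simp only [Function.update_self, Function.update_of_ne hjj] at this
      exact zmod2_add_one_ne x this
    rw [hj]
  have hset : ((Finset.univ : Finset (Fin k → ZMod 2)).filter
      fun v => ∃ (x : ZMod 2) (jj : Fin k), ∀ a, a ≠ jj → v a = x)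
      = insert (fun _ => (0 : ZMod 2)) (insert (fun _ => (1 : ZMod 2))
          (Finset.image F Finset.univ)) := by
    ext v
    simp only [Finset.mem_filter, Finset.mem_univ, true_and, Finset.mem_insert,
      Finset.mem_image]
    constructor
    · rintro ⟨x, jj, h⟩
      by_cases hv : v jj = x
      · have hconst : v = fun _ => x := by
          funext a
          by_cases ha : a = jj
          · rw [ha]; exact hv
          · exact h a ha
        rcases zmod2_cases x with h0 | h1
        · left; rw [hconst, h0]
        · right; left; rw [hconst, h1]
      · right; right
        refine ⟨(x, jj), ?_⟩
        funext a
        by_cases ha : a = jj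
        · subst ha
          rw [hF]
          simp only [Function.update_self]
          exact (zmod2_ne hv).symm
        · rw [hF]
          simp only [Function.update_of_ne ha]
          exact (h a ha).symm
    · rintro (h0 | h1 | ⟨⟨x, jj⟩, hFv⟩)
      · exact ⟨0, ⟨0, hk0⟩, fun a _ => by simp [h0]⟩
      · exact ⟨1, ⟨0, hk0⟩, fun a _ => by simp [h1]⟩
      · refine ⟨x, jj, fun a ha => ?_⟩
        rw [← hFv, hF]
        simp only [Function.update_of_ne ha]
  rw [hset]
  have hmemF : ∀ y : ZMod 2, (fun _ => y) ∉ Finset.image F Finset.univ := by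
    intro y hy
    rw [Finset.mem_image] at hy
    obtain ⟨⟨x, jj⟩, -, hFv⟩ := hy
    obtain ⟨a, ha1, -⟩ := exists_third hk jj jj
    have h1 := congrFun hFv jj
    have h2 := congrFun hFv a
    rw [hF] at h1 h2
    simp only [Function.update_self] at h1
    simp only [Function.update_of_ne ha1] at h2
    rw [h2] at h1
    exact zmod2_add_one_ne y h1
  have hne01 : (fun _ => (0 : ZMod 2) : Fin k → ZMod 2) ≠ (fun _ => (1 : ZMod 2)) := by
    intro h
    have := congrFun h ⟨0, hk0⟩
    exact absurd this (by decide)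
  rw [Finset.card_insert_of_notMem (by
      simp only [Finset.mem_insert]
      push_neg
      exact ⟨hne01, hmemF 0⟩),
    Finset.card_insert_of_notMem (hmemF 1),
    Finset.card_image_of_injective _ hFinj]
  simp [Fintype.card_fin]

/-- The vector of deviation parities of a set `S`. -/
def gvec {n k : ℕ} (I : Fin k → Finset (Fin n)) (S : Finset (Fin n)) : Fin k → ZMod 2 :=
  fun a => ((S ∩ I a).card : ZMod 2)

lemma fiber_const {n k : ℕ} (I : Fin k → Finset (Fin n)) (hne : ∀ a, (I a).Nonempty)
    (hdisj : ∀ a b, a ≠ b → Disjoint (I a) (I b)) (v w : Fin k → ZMod 2) :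
    ((Finset.univ : Finset (Finset (Fin n))).filter fun S => gvec I S = v).card
      = ((Finset.univ : Finset (Finset (Fin n))).filter fun S => gvec I S = w).card := by
  set j : Fin k → Fin n := fun a => (hne a).choose with hjdef
  have hj : ∀ a, j a ∈ I a := fun a => (hne a).choose_spec
  set D : Finset (Fin n) := (Finset.univ.filter fun a => v a ≠ w a).image j with hD
  have hDI : ∀ a, D ∩ I a = if v a = w a then (∅ : Finset (Fin n)) else {j a} := by
    intro a
    ext i
    simp only [hD, Finset.mem_inter, Finset.mem_image, Finset.mem_filter, Finset.mem_univ,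
      true_and]
    constructor
    · rintro ⟨⟨b, hb, rfl⟩, hi⟩
      have hba : b = a := by
        by_contra hba
        exact Finset.disjoint_left.mp (hdisj b a hba) (hj b) hi
      subst hba
      simp [hb]
    · intro hi
      by_cases hvw : v a = w a
      · simp [hvw] at hi
      · simp only [hvw, if_false, Finset.mem_singleton] at hi
        subst hi
        exact ⟨⟨a, hvw, rfl⟩, hj a⟩
  have key : ∀ (S : Finset (Fin n)) a,
      gvec I (symmDiff S D) a = gvec I S a + v a + w a := by
    intro S a
    have hinter : symmDiff S D ∩ I a = symmDiff (S ∩ I a) (D ∩ I a) := by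
      have := inf_symmDiff_distrib_right S D (I a)
      simpa [Finset.inf_eq_inter] using this
    unfold gvec
    rw [hinter, zcard_symmDiff, hDI a]
    by_cases hvw : v a = w a
    · rw [if_pos hvw, hvw]
      simp only [Finset.card_empty, Nat.cast_zero]
      linear_combination -two_zsmul' (w a)
    · rw [if_neg hvw]
      simp only [Finset.card_singleton, Nat.cast_one]
      linear_combination -zmod2_ne_add hvw
  have hback : ∀ (S : Finset (Fin n)), symmDiff (symmDiff S D) D = S :=
    fun S => symmDiff_symmDiff_cancel_right D S
  apply Finset.card_bij' (fun S _ => symmDiff S D) (fun S _ => symmDiff S D)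
  · intro S hS
    simp only [Finset.mem_filter, Finset.mem_univ, true_and] at hS ⊢
    funext a
    rw [key S a, congrFun hS a]
    linear_combination two_zsmul' (v a)
  · intro S hS
    simp only [Finset.mem_filter, Finset.mem_univ, true_and] at hS ⊢
    funext a
    rw [key S a, congrFun hS a]
    linear_combination two_zsmul' (w a) + two_zsmul' (v a) - two_zsmul' (v a)
  · intro S _; exact hback S
  · intro S _; exact hback S

/-- Let `k ≥ 4` and suppose the partial `k`-NU operation applies
non-projectively to `t₁,…,t_k ∈ {0,1}^n` with result `t`, witnessed by
nonempty pairwise disjoint deviation sets `I a`. Then the number of sets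
`S ⊆ [n]` for which the column of parity bits `(y(t₁),…,y(t_k))` lies in the
domain of the partial `k`-NU operation (i.e. all but at most one coordinate
agree) is exactly `((2k+2)/2^k)·2^n`. -/
theorem stmt_18 (k n : ℕ) (hk : 4 ≤ k) (t : Fin n → Bool)
    (ts : Fin k → (Fin n → Bool)) (I : Fin k → Finset (Fin n))
    (hne : ∀ a, (I a).Nonempty)
    (hdisj : ∀ a b, a ≠ b → Disjoint (I a) (I b))
    (hflip : ∀ a j, ts a j ≠ t j ↔ j ∈ I a) :
    2 ^ k * (Finset.univ.filter fun S : Finset (Fin n) =>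
        ∃ (x : Bool) (jj : Fin k), ∀ a, a ≠ jj → parityBit S (ts a) = x).card
      = (2 * k + 2) * 2 ^ n := by
  classical
  -- Step 1: rewrite the condition via `gvec`.
  have hpar : ∀ (S : Finset (Fin n)) a, parityBit S (ts a) =
      decide ((∑ i ∈ S, (if t i = true then (1 : ZMod 2) else 0)) + gvec I S a = 1) := by
    intro S a
    rw [parityBit_eq_decide]
    have hsum : ∑ i ∈ S, (if ts a i = true then (1 : ZMod 2) else 0)
        = (∑ i ∈ S, (if t i = true then (1 : ZMod 2) else 0)) + gvec I S a := by
      have hpt : ∀ i, (if ts a i = true then (1 : ZMod 2) else 0)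
          = (if t i = true then (1 : ZMod 2) else 0)
            + (if i ∈ I a then (1 : ZMod 2) else 0) := by
        intro i
        by_cases hi : i ∈ I a
        · have hne2 : ts a i ≠ t i := (hflip a i).mpr hi
          rw [if_pos hi]
          cases h1 : t i <;> cases h2 : ts a i <;> simp_all <;>
            first
            | rfl
            | (exact (by decide : (0 : ZMod 2) = 1 + 1))
        · have heq : ts a i = t i := by
            by_contra hne3; exact hi ((hflip a i).mp hne3)
          rw [heq, if_neg hi, add_zero]
      rw [Finset.sum_congr rfl (fun i _ => hpt i), Finset.sum_add_distrib]
      congr 1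
      rw [← Finset.sum_filter]
      have hfe : S.filter (fun i => i ∈ I a) = S ∩ I a := by
        ext i; simp [Finset.mem_inter]
      rw [hfe]
      simp [gvec]
    rw [hsum]
  have hcond : ∀ S : Finset (Fin n),
      (∃ (x : Bool) (jj : Fin k), ∀ a, a ≠ jj → parityBit S (ts a) = x)
        ↔ (∃ (x : ZMod 2) (jj : Fin k), ∀ a, a ≠ jj → gvec I S a = x) := by
    intro S
    set c : ZMod 2 := ∑ i ∈ S, (if t i = true then (1 : ZMod 2) else 0) with hc
    constructor
    · rintro ⟨x, jj, h⟩
      refine ⟨(if x then 1 + c else c), jj, fun a ha => ?_⟩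
      have := h a ha
      rw [hpar S a] at this
      exact (decide_zmod_helper c _ x).mp this
    · rintro ⟨x, jj, h⟩
      refine ⟨decide (c + x = 1), jj, fun a ha => ?_⟩
      rw [hpar S a, h a ha]
  have hfilter : (Finset.univ.filter fun S : Finset (Fin n) =>
        ∃ (x : Bool) (jj : Fin k), ∀ a, a ≠ jj → parityBit S (ts a) = x)
      = (Finset.univ.filter fun S : Finset (Fin n) =>
        ∃ (x : ZMod 2) (jj : Fin k), ∀ a, a ≠ jj → gvec I S a = x) := by
    apply Finset.filter_congr
    intro S _
    exact hcond S
  rw [hfilter]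
  -- Step 2: every fiber of `gvec` satisfies `2^k * fiber = 2^n`.
  have hcount : ∀ v : Fin k → ZMod 2,
      2 ^ k * ((Finset.univ : Finset (Finset (Fin n))).filter
        fun S => gvec I S = v).card = 2 ^ n := by
    intro v
    have htot : (Finset.univ : Finset (Finset (Fin n))).card
        = ∑ w : Fin k → ZMod 2, ((Finset.univ : Finset (Finset (Fin n))).filter
            fun S => gvec I S = w).card :=
      Finset.card_eq_sum_card_fiberwise (fun S _ => Finset.mem_univ _)
    have hconst : ∀ w : Fin k → ZMod 2,
        ((Finset.univ : Finset (Finset (Fin n))).filter fun S => gvec I S = w).card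
          = ((Finset.univ : Finset (Finset (Fin n))).filter fun S => gvec I S = v).card :=
      fun w => fiber_const I hne hdisj w v
    rw [Finset.sum_congr rfl (fun w _ => hconst w), Finset.sum_const, smul_eq_mul] at htot
    rw [Finset.card_univ, Fintype.card_finset, Fintype.card_fin] at htot
    have huniv : (Finset.univ : Finset (Fin k → ZMod 2)).card = 2 ^ k := by
      simp [Fintype.card_fun]
    rw [huniv] at htot
    exact htot.symm
  -- Step 3: decompose by fibers over the good vectors.
  set Av : Finset (Fin k → ZMod 2) := (Finset.univ.filter
    fun v => ∃ (x : ZMod 2) (jj : Fin k), ∀ a, a ≠ jj → v a = x) with hAv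
  have hsplit : (Finset.univ.filter fun S : Finset (Fin n) =>
        ∃ (x : ZMod 2) (jj : Fin k), ∀ a, a ≠ jj → gvec I S a = x).card
      = ∑ v ∈ Av, ((Finset.univ : Finset (Finset (Fin n))).filter
          fun S => gvec I S = v).card := by
    rw [Finset.card_eq_sum_card_fiberwise (f := fun S => gvec I S) (t := Av)
      (fun S hS => by
        simp only [hAv, Finset.mem_coe, Finset.mem_filter, Finset.mem_univ, true_and] at hS ⊢
        exact hS)]
    apply Finset.sum_congr rfl
    intro v hv
    congr 1
    ext S
    simp only [hAv, Finset.mem_filter, Finset.mem_univ, true_and] at hv ⊢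
    constructor
    · rintro ⟨-, h⟩; exact h
    · intro h
      refine ⟨?_, h⟩
      obtain ⟨x, jj, hx⟩ := hv
      exact ⟨x, jj, fun a ha => by rw [h]; exact hx a ha⟩
  rw [hsplit, Finset.mul_sum, Finset.sum_congr rfl (fun v _ => hcount v),
    Finset.sum_const, smul_eq_mul]
  have hAcard : Av.card = 2 * k + 2 := card_nu_vectors k hk
  rw [hAcard]
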